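/- The Cantor set C and the set C# are forward invariant under the renormalization map with equality: R(C) = C and R(C#) = C#. -/
import Mathlib

open Set

noncomputable section

/-- The golden ratio `(1+√5)/2`. -/
def gold : ℝ := (1 + Real.sqrt 5) / 2

/-- The renormalization map `R` on `[0,2)`. -/
def Rmap (y : ℝ) : ℝ :=
  if y < 2 - gold then gold ^ 3 * y
  else if y < 4 - 2 * gold then y + 2 * gold - 2
  else if y < 2 * gold - 2 then gold ^ 3 * y - 2 * gold
  else if y < gold then y - 2 * gold + 2
  else gold ^ 3 * y - 4 * gold

/-- The Cantor set `C`: sums `Σ a_k φ^(-3k)` with digits `a_k ∈ {0, 4-2φ, 2φ-2}`. -/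
def cantorC : Set ℝ :=
  {x | ∃ a : ℕ → ℝ, (∀ k, a k = 0 ∨ a k = 4 - 2 * gold ∨ a k = 2 * gold - 2) ∧
    x = ∑' k : ℕ, a k * (gold ^ (3 * k))⁻¹}

/-- The endpoints of the connected components of `ℝ ∖ C`. -/
def cantorEndpoints : Set ℝ :=
  {x | ∃ y : ℝ, y ∉ cantorC ∧ x ∈ closure (connectedComponentIn cantorCᶜ y)}

/-- `C♯`: the Cantor set minus the endpoints of complementary components. -/
def cantorCsharp : Set ℝ := cantorC \ cantorEndpoints

/-! ### Auxiliary facts about the golden ratio -/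

lemma gold_lb : 1.618 < gold := by
  have h : (2.236 : ℝ) < Real.sqrt 5 := by
    have := Real.lt_sqrt (x := 2.236) (y := 5) (by norm_num)
    rw [this]; norm_num
  unfold gold; linarith

lemma gold_ub : gold < 1.6181 := by
  have h : Real.sqrt 5 < 2.2362 := by
    have := Real.sqrt_lt' (x := 5) (y := 2.2362) (by norm_num)
    rw [this]; norm_num
  unfold gold; linarith

lemma goldSq : gold ^ 2 = gold + 1 := by
  have h5 : Real.sqrt 5 ^ 2 = 5 := Real.sq_sqrt (by norm_num)
  unfold gold; nlinarith [h5]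

lemma goldPos : 0 < gold := by linarith [gold_lb]

lemma goldCube : gold ^ 3 = 2 * gold + 1 := by nlinarith [goldSq]

lemma goldCubePos : 0 < gold ^ 3 := pow_pos goldPos 3

lemma rPos : 0 < 2 * gold - 3 := by linarith [gold_lb]

lemma rLtOne : 2 * gold - 3 < 1 := by linarith [gold_ub]

lemma invGoldCube : (gold ^ 3)⁻¹ = 2 * gold - 3 :=
  inv_eq_of_mul_eq_one_right (by nlinarith [goldSq])

/-! ### Digits and series -/

/-- digit predicate -/
def IsDigit (d : ℝ) : Prop := d = 0 ∨ d = 4 - 2 * gold ∨ d = 2 * gold - 2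

lemma digit_nonneg {d : ℝ} (hd : IsDigit d) : 0 ≤ d := by
  rcases hd with h | h | h <;> rw [h] <;> linarith [gold_lb, gold_ub]

lemma digit_le {d : ℝ} (hd : IsDigit d) : d ≤ 2 * gold - 2 := by
  rcases hd with h | h | h <;> rw [h] <;> linarith [gold_lb, gold_ub]

lemma pow_inv_eq (k : ℕ) : (gold ^ (3 * k))⁻¹ = (2 * gold - 3) ^ k := by
  rw [pow_mul, ← inv_pow, invGoldCube]

lemma digit_summable {a : ℕ → ℝ} (ha : ∀ k, IsDigit (a k)) :
    Summable (fun k => a k * (gold ^ (3 * k))⁻¹) := by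
  apply Summable.of_nonneg_of_le
    (g := fun k => a k * (gold ^ (3 * k))⁻¹)
    (f := fun k => (2 * gold - 2) * (2 * gold - 3) ^ k)
  · intro k
    have := digit_nonneg (ha k)
    have : (0:ℝ) ≤ (2 * gold - 3) ^ k := pow_nonneg (le_of_lt rPos) k
    rw [pow_inv_eq]
    positivity
  · intro k
    rw [pow_inv_eq]
    have h1 := digit_le (ha k)
    have h2 : (0:ℝ) ≤ (2 * gold - 3) ^ k := pow_nonneg (le_of_lt rPos) k
    exact mul_le_mul_of_nonneg_right h1 h2
  · exact (summable_geometric_of_lt_one (le_of_lt rPos) rLtOne).mul_left _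

lemma tsum_const_digit : ∑' k : ℕ, (2 * gold - 2) * (gold ^ (3 * k))⁻¹ = gold := by
  have h : ∀ k : ℕ, (2 * gold - 2) * (gold ^ (3 * k))⁻¹
      = (2 * gold - 2) * (2 * gold - 3) ^ k := by
    intro k; rw [pow_inv_eq]
  rw [tsum_congr h, tsum_mul_left, tsum_geometric_of_lt_one (le_of_lt rPos) rLtOne]
  rw [← div_eq_mul_inv, div_eq_iff (by norm_num; nlinarith [gold_ub] : (1:ℝ) - (2 * gold - 3) ≠ 0)]
  nlinarith [goldSq]

lemma gold_mem : gold ∈ cantorC := by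
  refine ⟨fun _ => 2 * gold - 2, fun k => Or.inr (Or.inr rfl), ?_⟩
  exact tsum_const_digit.symm

lemma cantorC_nonneg {x : ℝ} (hx : x ∈ cantorC) : 0 ≤ x := by
  obtain ⟨a, ha, rfl⟩ := hx
  apply tsum_nonneg
  intro k
  have := digit_nonneg (ha k)
  have h2 : (0:ℝ) ≤ (gold ^ (3*k))⁻¹ := by rw [pow_inv_eq]; exact pow_nonneg (le_of_lt rPos) k
  positivity

lemma cantorC_le {x : ℝ} (hx : x ∈ cantorC) : x ≤ gold := by
  obtain ⟨a, ha, rfl⟩ := hx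
  have key : ∑' k : ℕ, a k * (gold ^ (3*k))⁻¹ ≤ ∑' k : ℕ, (2*gold-2) * (gold ^ (3*k))⁻¹ := by
    apply Summable.tsum_le_tsum _ (digit_summable ha) (digit_summable (fun _ => Or.inr (Or.inr rfl)))
    intro k
    have h1 := digit_le (ha k)
    have h2 : (0:ℝ) ≤ (gold ^ (3*k))⁻¹ := by rw [pow_inv_eq]; exact pow_nonneg (le_of_lt rPos) k
    exact mul_le_mul_of_nonneg_right h1 h2
  rw [tsum_const_digit] at key
  exact key

/-- The shift decomposition: membership in C is equivalent to `d + r * x'` form. -/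
lemma mem_shift {x : ℝ} (hx : x ∈ cantorC) :
    ∃ d x', IsDigit d ∧ x' ∈ cantorC ∧ x = d + (2 * gold - 3) * x' := by
  obtain ⟨a, ha, rfl⟩ := hx
  refine ⟨a 0, ∑' k : ℕ, a (k+1) * (gold ^ (3 * k))⁻¹, ha 0,
    ⟨fun k => a (k+1), fun k => ha (k+1), rfl⟩, ?_⟩
  rw [Summable.tsum_eq_zero_add (digit_summable ha)]
  simp only [Nat.mul_zero, pow_zero, inv_one, mul_one]
  congr 1
  have h : ∀ k : ℕ, a (k+1) * (gold ^ (3 * (k+1)))⁻¹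
      = (2*gold-3) * (a (k+1) * (gold ^ (3*k))⁻¹) := by
    intro k
    rw [pow_inv_eq, pow_inv_eq, pow_succ]
    ring
  rw [tsum_congr h, tsum_mul_left]

lemma shift_mem {d x' : ℝ} (hd : IsDigit d) (hx' : x' ∈ cantorC) :
    d + (2 * gold - 3) * x' ∈ cantorC := by
  obtain ⟨b, hb, rfl⟩ := hx'
  refine ⟨fun k => Nat.casesOn k d (fun n => b n), fun k => by cases k with
    | zero => exact hd
    | succ n => exact hb n, ?_⟩
  rw [Summable.tsum_eq_zero_add (f := fun k => (Nat.casesOn k d (fun n => b n) : ℝ) * (gold ^ (3*k))⁻¹)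
    (digit_summable (fun k => by cases k with
      | zero => exact hd
      | succ n => exact hb n))]
  simp only [Nat.mul_zero, pow_zero, inv_one, mul_one]
  congr 1
  have h : ∀ k : ℕ, (b k : ℝ) * (gold ^ (3 * (k+1)))⁻¹
      = (2*gold-3) * (b k * (gold ^ (3*k))⁻¹) := by
    intro k
    rw [pow_inv_eq, pow_inv_eq, pow_succ]
    ring
  rw [← tsum_mul_left, ← tsum_congr h]

/-! ### Gaps and endpoints -/

/-- `x` has a gap in `C` immediately to its right. -/
def GapR (x : ℝ) : Prop := ∃ ε > 0, ∀ w ∈ cantorC, ¬ (x < w ∧ w < x + ε)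

/-- `x` has a gap in `C` immediately to its left. -/
def GapL (x : ℝ) : Prop := ∃ ε > 0, ∀ w ∈ cantorC, ¬ (x - ε < w ∧ w < x)

lemma gapR_gold : GapR gold :=
  ⟨1, one_pos, fun w hw h => absurd (cantorC_le hw) (not_le.mpr h.1)⟩

lemma gap_mem_endpoints {x : ℝ} (h : GapR x ∨ GapL x) : x ∈ cantorEndpoints := by
  rcases h with ⟨ε, hε, hgap⟩ | ⟨ε, hε, hgap⟩
  · refine ⟨x + ε/2, fun hc => hgap _ hc ⟨by linarith, by linarith⟩, ?_⟩
    have hsub : Ioo x (x + ε) ⊆ cantorCᶜ := fun w hw hc => hgap w hc ⟨hw.1, hw.2⟩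
    have hmem : x + ε/2 ∈ Ioo x (x + ε) := ⟨by linarith, by linarith⟩
    have h1 : Ioo x (x + ε) ⊆ connectedComponentIn cantorCᶜ (x + ε/2) :=
      isPreconnected_Ioo.subset_connectedComponentIn hmem hsub
    have h2 : x ∈ closure (Ioo x (x + ε)) := by
      rw [closure_Ioo (by linarith : x ≠ x + ε)]
      exact ⟨le_refl x, by linarith⟩
    exact closure_mono h1 h2
  · refine ⟨x - ε/2, fun hc => hgap _ hc ⟨by linarith, by linarith⟩, ?_⟩
    have hsub : Ioo (x - ε) x ⊆ cantorCᶜ := fun w hw hc => hgap w hc ⟨hw.1, hw.2⟩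
    have hmem : x - ε/2 ∈ Ioo (x - ε) x := ⟨by linarith, by linarith⟩
    have h1 : Ioo (x - ε) x ⊆ connectedComponentIn cantorCᶜ (x - ε/2) :=
      isPreconnected_Ioo.subset_connectedComponentIn hmem hsub
    have h2 : x ∈ closure (Ioo (x - ε) x) := by
      rw [closure_Ioo (by linarith : x - ε ≠ x)]
      exact ⟨by linarith, le_refl x⟩
    exact closure_mono h1 h2

lemma endpoints_gap {x : ℝ} (hx : x ∈ cantorC) (he : x ∈ cantorEndpoints) :
    GapR x ∨ GapL x := by
  obtain ⟨y, hy, hcl⟩ := he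
  set U := connectedComponentIn cantorCᶜ y with hU
  have hyU : y ∈ U := mem_connectedComponentIn hy
  have hUC : U ⊆ cantorCᶜ := connectedComponentIn_subset _ _
  have hxU : x ∉ U := fun h => hUC h hx
  have hUconn : IsPreconnected U := isPreconnected_connectedComponentIn
  rcases lt_or_gt_of_ne (fun h : y = x => hy (h ▸ hx)) with hlt | hgt
  · -- y < x : left gap of size x - y
    right
    refine ⟨x - y, by linarith, fun w hw ⟨h1, h2⟩ => ?_⟩
    -- h1 : x - (x - y) < w, i.e. y < w ; h2 : w < x
    obtain ⟨v, hv, hvd⟩ := Metric.mem_closure_iff.mp hcl (x - w) (by linarith)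
    have hvx : v < x := by
      rcases lt_or_ge v x with h | h
      · exact h
      · rcases lt_or_eq_of_le h with h' | h'
        · exact absurd (hUconn.Icc_subset hyU hv ⟨le_of_lt (by linarith), le_of_lt h'⟩) hxU
        · exact absurd (h' ▸ hv) hxU
    have hwv : w < v := by
      rw [Real.dist_eq, abs_lt] at hvd
      linarith
    exact hUC (hUconn.Icc_subset hyU hv ⟨by linarith, le_of_lt hwv⟩) hw
  · -- y > x : right gap
    left
    refine ⟨y - x, by linarith, fun w hw ⟨h1, h2⟩ => ?_⟩
    obtain ⟨v, hv, hvd⟩ := Metric.mem_closure_iff.mp hcl (w - x) (by linarith)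
    have hvx : x < v := by
      rcases lt_or_ge x v with h | h
      · exact h
      · rcases lt_or_eq_of_le h with h' | h'
        · exact absurd (hUconn.Icc_subset hv hyU ⟨le_of_lt h', le_of_lt (by linarith)⟩) hxU
        · exact absurd (h' ▸ hv) hxU
    have hwv : v < w := by
      rw [Real.dist_eq, abs_lt] at hvd
      linarith
    exact hUC (hUconn.Icc_subset hv hyU ⟨le_of_lt hwv, by linarith⟩) hw

/-! ### Gap transfer under the similarity maps -/

lemma fivegold : 0 < 5 * gold - 8 := by linarith [gold_lb]

/-- Points in distinct pieces of `C` are at distance at least `5φ-8`. -/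
lemma digit_eq {d e x' w' : ℝ} (hd : IsDigit d) (he : IsDigit e)
    (h0x : 0 ≤ x') (h1x : x' ≤ gold) (h0w : 0 ≤ w') (h1w : w' ≤ gold)
    (hclose : |(d + (2 * gold - 3) * x') - (e + (2 * gold - 3) * w')| < 5 * gold - 8) :
    d = e := by
  have hrx0 : 0 ≤ (2 * gold - 3) * x' := mul_nonneg (le_of_lt rPos) h0x
  have hrx1 : (2 * gold - 3) * x' ≤ 2 - gold := by nlinarith [goldSq, rPos]
  have hrw0 : 0 ≤ (2 * gold - 3) * w' := mul_nonneg (le_of_lt rPos) h0w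
  have hrw1 : (2 * gold - 3) * w' ≤ 2 - gold := by nlinarith [goldSq, rPos]
  rw [abs_lt] at hclose
  obtain ⟨hc1, hc2⟩ := hclose
  have gb1 := gold_lb
  have gb2 := gold_ub
  rcases hd with rfl | rfl | rfl <;> rcases he with rfl | rfl | rfl <;>
    first
      | rfl
      | (exfalso; linarith)

lemma gapR_shift {d x' : ℝ} (hd : IsDigit d) (hx' : x' ∈ cantorC) :
    GapR (d + (2 * gold - 3) * x') ↔ GapR x' := by
  constructor
  · rintro ⟨ε, hε, hgap⟩
    refine ⟨gold ^ 3 * ε, mul_pos goldCubePos hε, fun w hw ⟨h1, h2⟩ => ?_⟩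
    have hr : (2 * gold - 3) * (gold ^ 3) = 1 := by nlinarith [goldSq]
    apply hgap (d + (2 * gold - 3) * w) (shift_mem hd hw)
    constructor
    · nlinarith [rPos]
    · nlinarith [rPos]
  · rintro ⟨ε, hε, hgap⟩
    refine ⟨min ((2 * gold - 3) * ε) (5 * gold - 8),
      lt_min (mul_pos rPos hε) fivegold, fun w hw ⟨h1, h2⟩ => ?_⟩
    obtain ⟨e, w', he, hw', rfl⟩ := mem_shift hw
    have hde : d = e := by
      apply digit_eq hd he (cantorC_nonneg hx') (cantorC_le hx')
        (cantorC_nonneg hw') (cantorC_le hw')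
      rw [abs_lt]
      have := min_le_right ((2 * gold - 3) * ε) (5 * gold - 8)
      constructor <;> nlinarith [rPos]
    subst hde
    apply hgap w' hw'
    have h2' : d + (2 * gold - 3) * w' < d + (2 * gold - 3) * x' + (2 * gold - 3) * ε :=
      lt_of_lt_of_le h2 (by linarith [min_le_left ((2 * gold - 3) * ε) (5 * gold - 8)])
    constructor
    · nlinarith [rPos]
    · nlinarith [rPos]

lemma gapL_shift {d x' : ℝ} (hd : IsDigit d) (hx' : x' ∈ cantorC) :
    GapL (d + (2 * gold - 3) * x') ↔ GapL x' := by
  constructor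
  · rintro ⟨ε, hε, hgap⟩
    refine ⟨gold ^ 3 * ε, mul_pos goldCubePos hε, fun w hw ⟨h1, h2⟩ => ?_⟩
    have hr : (2 * gold - 3) * (gold ^ 3) = 1 := by nlinarith [goldSq]
    apply hgap (d + (2 * gold - 3) * w) (shift_mem hd hw)
    constructor
    · nlinarith [rPos]
    · nlinarith [rPos]
  · rintro ⟨ε, hε, hgap⟩
    refine ⟨min ((2 * gold - 3) * ε) (5 * gold - 8),
      lt_min (mul_pos rPos hε) fivegold, fun w hw ⟨h1, h2⟩ => ?_⟩
    obtain ⟨e, w', he, hw', rfl⟩ := mem_shift hw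
    have hde : d = e := by
      apply digit_eq hd he (cantorC_nonneg hx') (cantorC_le hx')
        (cantorC_nonneg hw') (cantorC_le hw')
      rw [abs_lt]
      have := min_le_right ((2 * gold - 3) * ε) (5 * gold - 8)
      constructor <;> nlinarith [rPos]
    subst hde
    apply hgap w' hw'
    have h1' : d + (2 * gold - 3) * x' - (2 * gold - 3) * ε < d + (2 * gold - 3) * w' :=
      lt_of_le_of_lt (by linarith [min_le_left ((2 * gold - 3) * ε) (5 * gold - 8)]) h1
    constructor
    · nlinarith [rPos]
    · nlinarith [rPos]

/-! ### Golden ratio identities and Rmap branch lemmas -/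

lemma idI1 : gold ^ 3 * (2 * gold - 3) = 1 := by
  linear_combination (2 * gold ^ 2 - gold + 1) * goldSq

lemma idI2 : gold ^ 3 * (4 - 2 * gold) = 2 * gold := by
  linear_combination (-2 * gold ^ 2 + 2 * gold) * goldSq

lemma idI3 : (2 * gold - 3) * gold = 2 - gold := by
  linear_combination 2 * goldSq

lemma idI4 : gold ^ 3 * gold - 4 * gold = 2 - gold := by
  linear_combination (gold ^ 2 + gold + 2) * goldSq

lemma idI5 : 2 * gold - 2 + (2 * gold - 3) * gold = gold := by
  linear_combination 2 * goldSq

lemma dig0 : IsDigit 0 := Or.inl rfl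
lemma dig1 : IsDigit (4 - 2 * gold) := Or.inr (Or.inl rfl)
lemma dig2 : IsDigit (2 * gold - 2) := Or.inr (Or.inr rfl)

lemma Rmap_eq1 {y : ℝ} (h : y < 2 - gold) : Rmap y = gold ^ 3 * y := by
  unfold Rmap; rw [if_pos h]

lemma Rmap_eq2 {y : ℝ} (h1 : ¬ y < 2 - gold) (h2 : y < 4 - 2 * gold) :
    Rmap y = y + 2 * gold - 2 := by
  unfold Rmap; rw [if_neg h1, if_pos h2]

lemma Rmap_eq3 {y : ℝ} (h1 : ¬ y < 2 - gold) (h2 : ¬ y < 4 - 2 * gold)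
    (h3 : y < 2 * gold - 2) : Rmap y = gold ^ 3 * y - 2 * gold := by
  unfold Rmap; rw [if_neg h1, if_neg h2, if_pos h3]

lemma Rmap_eq4 {y : ℝ} (h1 : ¬ y < 2 - gold) (h2 : ¬ y < 4 - 2 * gold)
    (h3 : ¬ y < 2 * gold - 2) (h4 : y < gold) : Rmap y = y - 2 * gold + 2 := by
  unfold Rmap; rw [if_neg h1, if_neg h2, if_neg h3, if_pos h4]

lemma Rmap_eq5 {y : ℝ} (h1 : ¬ y < 2 - gold) (h2 : ¬ y < 4 - 2 * gold)
    (h3 : ¬ y < 2 * gold - 2) (h4 : ¬ y < gold) : Rmap y = gold ^ 3 * y - 4 * gold := by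
  unfold Rmap; rw [if_neg h1, if_neg h2, if_neg h3, if_neg h4]

/-- On the middle piece, `Rmap` inverts the similarity `z ↦ (4-2φ) + φ⁻³ z`. -/
lemma Rmap_sigma1 {z : ℝ} (hz : z ∈ cantorC) :
    Rmap (4 - 2 * gold + (2 * gold - 3) * z) = z := by
  have h0 := cantorC_nonneg hz
  have h1 := cantorC_le hz
  have hr0 : 0 ≤ (2 * gold - 3) * z := mul_nonneg (le_of_lt rPos) h0
  have hr1 : (2 * gold - 3) * z ≤ 2 - gold := by
    calc (2 * gold - 3) * z ≤ (2 * gold - 3) * gold :=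
          mul_le_mul_of_nonneg_left h1 (le_of_lt rPos)
      _ = 2 - gold := idI3
  have gb1 := gold_lb
  have gb2 := gold_ub
  rw [Rmap_eq3 (by linarith) (by linarith) (by linarith)]
  calc gold ^ 3 * (4 - 2 * gold + (2 * gold - 3) * z) - 2 * gold
      = gold ^ 3 * (4 - 2 * gold) + gold ^ 3 * (2 * gold - 3) * z - 2 * gold := by ring
    _ = z := by rw [idI1, idI2]; ring

/-- Forward invariance together with endpoint tracking. -/
lemma Rmap_forward {x : ℝ} (hx : x ∈ cantorC) :
    Rmap x ∈ cantorC ∧ (Rmap x ∈ cantorEndpoints → x ∈ cantorEndpoints) := by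
  obtain ⟨d, x', hd, hx', hxeq⟩ := mem_shift hx
  subst hxeq
  have h0 := cantorC_nonneg hx'
  have h1 := cantorC_le hx'
  have hr0 : 0 ≤ (2 * gold - 3) * x' := mul_nonneg (le_of_lt rPos) h0
  have hr1 : (2 * gold - 3) * x' ≤ 2 - gold := by
    calc (2 * gold - 3) * x' ≤ (2 * gold - 3) * gold :=
          mul_le_mul_of_nonneg_left h1 (le_of_lt rPos)
      _ = 2 - gold := idI3
  have gb1 := gold_lb
  have gb2 := gold_ub
  rcases hd with rfl | rfl | rfl
  · -- first piece
    rcases lt_or_eq_of_le h1 with hlt | heq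
    · have hstrict : (2 * gold - 3) * x' < 2 - gold := by
        calc (2 * gold - 3) * x' < (2 * gold - 3) * gold :=
              mul_lt_mul_of_pos_left hlt rPos
          _ = 2 - gold := idI3
      rw [Rmap_eq1 (by linarith)]
      have hval : gold ^ 3 * ((0:ℝ) + (2 * gold - 3) * x') = x' := by
        calc gold ^ 3 * ((0:ℝ) + (2 * gold - 3) * x') = gold ^ 3 * (2 * gold - 3) * x' := by
              ring
          _ = x' := by rw [idI1, one_mul]
      rw [hval]
      refine ⟨hx', fun hE => ?_⟩
      apply gap_mem_endpoints
      rcases endpoints_gap hx' hE with h | h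
      · exact Or.inl ((gapR_shift dig0 hx').mpr h)
      · exact Or.inr ((gapL_shift dig0 hx').mpr h)
    · subst heq
      have hx2 : (0:ℝ) + (2 * gold - 3) * gold = 2 - gold := by rw [zero_add, idI3]
      rw [hx2, Rmap_eq2 (lt_irrefl _) (by linarith)]
      rw [show 2 - gold + 2 * gold - 2 = gold by ring]
      refine ⟨gold_mem, fun _ => ?_⟩
      apply gap_mem_endpoints
      left
      have h := (gapR_shift dig0 gold_mem).mpr gapR_gold
      rwa [hx2] at h
  · -- middle piece
    rw [Rmap_sigma1 hx']
    refine ⟨hx', fun hE => ?_⟩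
    apply gap_mem_endpoints
    rcases endpoints_gap hx' hE with h | h
    · exact Or.inl ((gapR_shift dig1 hx').mpr h)
    · exact Or.inr ((gapL_shift dig1 hx').mpr h)
  · -- last piece
    have hc1 : ¬ (2 * gold - 2 + (2 * gold - 3) * x' < 2 - gold) := by linarith
    have hc2 : ¬ (2 * gold - 2 + (2 * gold - 3) * x' < 4 - 2 * gold) := by linarith
    have hc3 : ¬ (2 * gold - 2 + (2 * gold - 3) * x' < 2 * gold - 2) := by linarith
    rcases lt_or_eq_of_le h1 with hlt | heq
    · have hstrict : (2 * gold - 3) * x' < 2 - gold := by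
        calc (2 * gold - 3) * x' < (2 * gold - 3) * gold :=
              mul_lt_mul_of_pos_left hlt rPos
          _ = 2 - gold := idI3
      rw [Rmap_eq4 hc1 hc2 hc3 (by linarith)]
      rw [show 2 * gold - 2 + (2 * gold - 3) * x' - 2 * gold + 2
            = 0 + (2 * gold - 3) * x' by ring]
      refine ⟨shift_mem dig0 hx', fun hE => ?_⟩
      apply gap_mem_endpoints
      rcases endpoints_gap (shift_mem dig0 hx') hE with h | h
      · exact Or.inl ((gapR_shift dig2 hx').mpr ((gapR_shift dig0 hx').mp h))
      · exact Or.inr ((gapL_shift dig2 hx').mpr ((gapL_shift dig0 hx').mp h))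
    · subst heq
      rw [idI5, Rmap_eq5 (by linarith) (by linarith) (by linarith) (lt_irrefl _)]
      rw [show gold ^ 3 * gold - 4 * gold = (0:ℝ) + (2 * gold - 3) * gold by
        rw [zero_add, idI3]; exact idI4]
      exact ⟨shift_mem dig0 gold_mem,
        fun _ => gap_mem_endpoints (Or.inl gapR_gold)⟩

/-- The Cantor set `C` and the set `C♯` are invariant under `R` with equality. -/
theorem Rmap_invariance_of_cantor :
    Rmap '' cantorC = cantorC ∧ Rmap '' cantorCsharp = cantorCsharp := by
  constructor
  · apply Subset.antisymm
    · rintro _ ⟨x, hx, rfl⟩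
      exact (Rmap_forward hx).1
    · intro z hz
      exact ⟨_, shift_mem dig1 hz, Rmap_sigma1 hz⟩
  · apply Subset.antisymm
    · rintro _ ⟨x, ⟨hxC, hxE⟩, rfl⟩
      exact ⟨(Rmap_forward hxC).1, fun hE => hxE ((Rmap_forward hxC).2 hE)⟩
    · rintro z ⟨hzC, hzE⟩
      refine ⟨_, ⟨shift_mem dig1 hzC, fun hE => hzE ?_⟩, Rmap_sigma1 hzC⟩
      rcases endpoints_gap (shift_mem dig1 hzC) hE with h | h
      · exact gap_mem_endpoints (Or.inl ((gapR_shift dig1 hzC).mp h))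
      · exact gap_mem_endpoints (Or.inr ((gapL_shift dig1 hzC).mp h))
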